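/- Let β > 1. There exist c > 0 and K such that the following holds for all k ≥ K and all n ≥ k. Let p be the Zipf(β, n) probability mass function on {1,…,n} (p_i = i^{−β}/Σ_{j=1}^n j^{−β}), let N = ⌊k^{β}/log log k⌋, let M = ⌊k/(log k)^{2/β}⌋, and let X_1, …, X_N be i.i.d. random variables each with law p (i.e., consider the N-fold product of the measure induced by p). Then the probability that there exists i ∈ {1,…,M} such that X_t ≠ i for every t ∈ {1,…,N} is at most k · exp(−c · (log k)^{2} / log log k). -/

import Mathlib

open MeasureTheory

/-- The Zipf(β, n) probability of content `i`: `i^{−β}/∑_{j=1}^n j^{−β}` for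
`i ∈ {1,…,n}` and `0` otherwise. -/
noncomputable def zipfP (β : ℝ) (n : ℕ) (i : ℕ) : ℝ :=
  if i ∈ Finset.Icc 1 n then
    (i : ℝ) ^ (-β) / (∑ j ∈ Finset.Icc 1 n, (j : ℝ) ^ (-β)) else 0

/-- The measure on `ℕ` induced by the Zipf(β, n) probability mass function. -/
noncomputable def zipfMeasure (β : ℝ) (n : ℕ) : Measure ℕ :=
  Measure.sum fun i => ENNReal.ofReal (zipfP β n i) • Measure.dirac i

lemma zipf_S_pos (β : ℝ) {n : ℕ} (hn : 1 ≤ n) :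
    0 < ∑ j ∈ Finset.Icc 1 n, (j : ℝ) ^ (-β) := by
  apply Finset.sum_pos
  · intro j hj
    have : 0 < j := by
      have := (Finset.mem_Icc.mp hj).1; omega
    exact Real.rpow_pos_of_pos (by exact_mod_cast this) _
  · exact ⟨1, Finset.mem_Icc.mpr ⟨le_refl 1, hn⟩⟩

lemma zipfP_nonneg (β : ℝ) (n i : ℕ) : 0 ≤ zipfP β n i := by
  unfold zipfP
  split
  · rename_i h
    have hn : 1 ≤ n := le_trans (Finset.mem_Icc.mp h).1 (Finset.mem_Icc.mp h).2
    exact div_nonneg (Real.rpow_nonneg (Nat.cast_nonneg i) _) (zipf_S_pos β hn).le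
  · exact le_refl 0

lemma zipfP_sum (β : ℝ) {n : ℕ} (hn : 1 ≤ n) :
    ∑ i ∈ Finset.Icc 1 n, zipfP β n i = 1 := by
  have hS := zipf_S_pos β (n := n) hn
  have : ∑ i ∈ Finset.Icc 1 n, zipfP β n i
      = ∑ i ∈ Finset.Icc 1 n, (i : ℝ) ^ (-β) / (∑ j ∈ Finset.Icc 1 n, (j : ℝ) ^ (-β)) :=
    Finset.sum_congr rfl fun i hi => by simp [zipfP, hi]
  rw [this, ← Finset.sum_div, div_self hS.ne']

lemma zipfMeasure_singleton (β : ℝ) (n i : ℕ) :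
    zipfMeasure β n {i} = ENNReal.ofReal (zipfP β n i) := by
  rw [zipfMeasure, Measure.sum_apply _ (measurableSet_singleton i)]
  rw [tsum_eq_single i]
  · simp
  · intro j hj
    have hd : Measure.dirac j {i} = 0 := by
      rw [Measure.dirac_apply' _ (measurableSet_singleton i)]
      simp [Set.indicator_apply, hj]
    simp [Measure.smul_apply, hd]

lemma zipfMeasure_univ (β : ℝ) {n : ℕ} (hn : 1 ≤ n) :
    zipfMeasure β n Set.univ = 1 := by
  rw [zipfMeasure, Measure.sum_apply _ MeasurableSet.univ]
  have h1 : ∀ i : ℕ, (ENNReal.ofReal (zipfP β n i) • Measure.dirac i) Set.univ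
      = ENNReal.ofReal (zipfP β n i) := by
    intro i; simp
  rw [tsum_congr h1, tsum_eq_sum (s := Finset.Icc 1 n) ?h]
  · rw [← ENNReal.ofReal_sum_of_nonneg (fun i _ => zipfP_nonneg β n i), zipfP_sum β hn]
    simp
  · intro i hi
    simp [zipfP, hi]

lemma zipfMeasure_isProb (β : ℝ) {n : ℕ} (hn : 1 ≤ n) :
    IsProbabilityMeasure (zipfMeasure β n) := ⟨zipfMeasure_univ β hn⟩

set_option maxHeartbeats 1000000 in
/-- Lemma 5 of the paper (event `E₂`): for `β > 1` there are `c > 0` and `K` such that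
for `k ≥ K` and `n ≥ k`, in `N = ⌊k^β/log log k⌋` i.i.d. Zipf(β, n) requests (the
`N`-fold product measure), the probability that some one of the `M = ⌊k/(log k)^{2/β}⌋`
most popular contents is never requested is at most
`k · exp(−c·(log k)²/log log k)`. -/
theorem zipf_popular_all_requested (β : ℝ) (hβ : 1 < β) :
    ∃ c : ℝ, 0 < c ∧ ∃ K : ℕ, ∀ k n : ℕ, K ≤ k → k ≤ n →
      let N : ℕ := ⌊(k : ℝ) ^ β / Real.log (Real.log k)⌋₊
      let M : ℕ := ⌊(k : ℝ) / (Real.log k) ^ (2 / β)⌋₊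
      Measure.pi (fun _ : Fin N => zipfMeasure β n)
          {x | ∃ i ∈ Finset.Icc 1 M, ∀ t : Fin N, x t ≠ i} ≤
        ENNReal.ofReal
          ((k : ℝ) * Real.exp (-(c * (Real.log k) ^ 2 / Real.log (Real.log k)))) := by
  have hβ0 : (0:ℝ) < β := lt_trans one_pos hβ
  have hsum : Summable (fun j : ℕ => (j:ℝ) ^ (-β)) :=
    Real.summable_nat_rpow.mpr (by linarith)
  set C := ∑' j : ℕ, (j:ℝ) ^ (-β) with hCdef
  have hC1 : 1 ≤ C := by
    have h := Summable.le_tsum hsum 1 (fun j _ => Real.rpow_nonneg (Nat.cast_nonneg j) _)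
    simpa using h
  have hC0 : (0:ℝ) < C := lt_of_lt_of_le one_pos hC1
  refine ⟨1/(2*C), by positivity, 256, ?_⟩
  intro k n hk hkn
  intro N M
  have hn1 : 1 ≤ n := le_trans (by omega) hkn
  haveI : IsProbabilityMeasure (zipfMeasure β n) := zipfMeasure_isProb β hn1
  have hk256 : (256:ℝ) ≤ (k:ℝ) := by exact_mod_cast hk
  have hk1 : (1:ℝ) ≤ (k:ℝ) := by linarith
  have hk0 : (0:ℝ) < (k:ℝ) := by linarith
  have hlogk : 1 < Real.log k := by
    rw [Real.lt_log_iff_exp_lt hk0]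
    calc Real.exp 1 < 2.7182818286 := Real.exp_one_lt_d9
      _ ≤ 256 := by norm_num
      _ ≤ (k:ℝ) := hk256
  have hlogk0 : 0 < Real.log k := lt_trans one_pos hlogk
  have hL : 0 < Real.log (Real.log k) := Real.log_pos hlogk
  set L := Real.log (Real.log k) with hLdef
  set lg := Real.log k with hlgdef
  have hsqrt : (4:ℝ) ≤ (k:ℝ) ^ (1/2 : ℝ) := by
    have h16 : (16:ℝ) ^ (1/2:ℝ) ≤ (k:ℝ) ^ (1/2:ℝ) :=
      Real.rpow_le_rpow (by norm_num) (by linarith) (by norm_num)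
    calc (4:ℝ) = (16:ℝ) ^ (1/2:ℝ) := by
          rw [show (16:ℝ) = 4 ^ (2:ℕ) by norm_num, ← Real.rpow_natCast (4:ℝ) 2,
            ← Real.rpow_mul (by norm_num)]
          norm_num
      _ ≤ _ := h16
  have hhalf : (k:ℝ) ^ (1/2:ℝ) * (k:ℝ) ^ (1/2:ℝ) = (k:ℝ) := by
    rw [← Real.rpow_add hk0]; norm_num
  have hkb0 : (0:ℝ) < (k:ℝ) ^ β := Real.rpow_pos_of_pos hk0 _
  have h2L : 2 * L ≤ (k:ℝ) ^ β := by
    have h1 : L ≤ lg := Real.log_le_self hlogk0.le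
    have h2 : lg ≤ (k:ℝ) ^ (1/2:ℝ) / (1/2:ℝ) := Real.log_le_rpow_div hk0.le (by norm_num)
    have h3 : (k:ℝ) ≤ (k:ℝ) ^ β := by
      calc (k:ℝ) = (k:ℝ) ^ (1:ℝ) := (Real.rpow_one _).symm
        _ ≤ _ := Real.rpow_le_rpow_of_exponent_le hk1 hβ.le
    nlinarith [Real.rpow_pos_of_pos hk0 (1/2:ℝ)]
  have hlogk2β : (1:ℝ) ≤ lg ^ (2/β : ℝ) :=
    Real.one_le_rpow hlogk.le (by positivity)
  have hM : (M:ℝ) ≤ (k:ℝ) / lg ^ (2/β : ℝ) := Nat.floor_le (by positivity)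
  have hMk : M ≤ k := by
    have h : (k:ℝ) / lg ^ (2/β:ℝ) ≤ (k:ℝ) := by
      rw [div_le_iff₀ (by positivity)]; nlinarith
    calc M ≤ ⌊(k:ℝ)⌋₊ := Nat.floor_le_floor h
      _ = k := Nat.floor_natCast k
  have hN : (k:ℝ) ^ β / L - 1 ≤ (N:ℝ) := by
    have h := Nat.lt_floor_add_one ((k:ℝ) ^ β / L)
    have : (N:ℝ) = (⌊(k:ℝ) ^ β / L⌋₊ : ℝ) := rfl
    rw [this]; push_cast at h ⊢; linarith
  set τ := 1/(2*C) * lg ^ 2 / L with hτdef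
  have hlg2 : (1:ℝ) ≤ lg ^ 2 := by nlinarith
  have hkey : ∀ i ∈ Finset.Icc 1 M, τ ≤ zipfP β n i * N := by
    intro i hi
    obtain ⟨hi1, hiM⟩ := Finset.mem_Icc.mp hi
    have hiN : i ∈ Finset.Icc 1 n := Finset.mem_Icc.mpr ⟨hi1, le_trans (le_trans hiM hMk) hkn⟩
    have hi0 : (0:ℝ) < (i:ℝ) := by exact_mod_cast hi1
    have hM0 : (0:ℝ) < (M:ℝ) := by
      have : 1 ≤ M := le_trans hi1 hiM
      exact_mod_cast this
    have h1 : ((M:ℝ)) ^ (-β) ≤ (i:ℝ) ^ (-β) :=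
      Real.rpow_le_rpow_of_nonpos hi0 (by exact_mod_cast hiM) (by linarith)
    have h2 : ((k:ℝ) / lg ^ (2/β:ℝ)) ^ (-β) ≤ ((M:ℝ)) ^ (-β) :=
      Real.rpow_le_rpow_of_nonpos hM0 hM (by linarith)
    have h3 : ((k:ℝ) / lg ^ (2/β:ℝ)) ^ (-β) = lg ^ 2 / (k:ℝ) ^ β := by
      rw [Real.div_rpow hk0.le (Real.rpow_nonneg hlogk0.le _), ← Real.rpow_mul hlogk0.le,
        show (2/β) * (-β) = (-2:ℝ) by field_simp,
        Real.rpow_neg hlogk0.le, Real.rpow_neg hk0.le,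
        show ((2:ℝ)) = ((2:ℕ):ℝ) by norm_num, Real.rpow_natCast]
      field_simp
    have hS : ∑ j ∈ Finset.Icc 1 n, (j:ℝ) ^ (-β) ≤ C :=
      Summable.sum_le_tsum _ (fun j _ => Real.rpow_nonneg (Nat.cast_nonneg j) _) hsum
    have hSpos := zipf_S_pos β hn1
    have hp : lg ^ 2 / (k:ℝ) ^ β / C ≤ zipfP β n i := by
      rw [zipfP, if_pos hiN]
      exact div_le_div₀ (Real.rpow_nonneg (Nat.cast_nonneg i) _)
        (le_trans (h3 ▸ h2) h1) hSpos hS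
    have hp0 : 0 ≤ zipfP β n i := zipfP_nonneg β n i
    have hfrac1 : (1:ℝ) ≤ (k:ℝ) ^ β / L - 1 := by
      rw [le_sub_iff_add_le, le_div_iff₀ hL]; nlinarith
    have step2 : zipfP β n i * ((k:ℝ) ^ β / L - 1) ≤ zipfP β n i * N :=
      mul_le_mul_of_nonneg_left hN hp0
    have step3 : lg ^ 2 / (k:ℝ) ^ β / C * ((k:ℝ) ^ β / L - 1)
        ≤ zipfP β n i * ((k:ℝ) ^ β / L - 1) :=
      mul_le_mul_of_nonneg_right hp (by linarith)
    have hXeq : lg ^ 2 / (k:ℝ) ^ β / C * ((k:ℝ) ^ β / L - 1)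
        = lg ^ 2 / (C * L) - lg ^ 2 / ((k:ℝ) ^ β * C) := by
      field_simp
    have h5 : lg ^ 2 / ((k:ℝ) ^ β * C) ≤ lg ^ 2 / (2 * L * C) := by
      apply div_le_div_of_nonneg_left (by nlinarith) (by positivity)
      nlinarith
    have hτeq : τ = lg ^ 2 / (C * L) - lg ^ 2 / (2 * L * C) := by
      rw [hτdef]; field_simp; ring
    linarith [hXeq ▸ step3]
  have hset : {x : Fin N → ℕ | ∃ i ∈ Finset.Icc 1 M, ∀ t : Fin N, x t ≠ i}
      = ⋃ i ∈ Finset.Icc 1 M, {x : Fin N → ℕ | ∀ t : Fin N, x t ≠ i} := by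
    ext x; simp
  rw [hset]
  refine le_trans (measure_biUnion_finset_le _ _) ?_
  have hone : ∀ i ∈ Finset.Icc 1 M,
      Measure.pi (fun _ : Fin N => zipfMeasure β n) {x | ∀ t : Fin N, x t ≠ i}
        ≤ ENNReal.ofReal (Real.exp (-τ)) := by
    intro i hi
    have hpiset : {x : Fin N → ℕ | ∀ t : Fin N, x t ≠ i}
        = Set.pi Set.univ (fun _ : Fin N => ({i}ᶜ : Set ℕ)) := by
      ext x; simp [Set.mem_pi]
    rw [hpiset, Measure.pi_pi]
    have hcompl : zipfMeasure β n ({i}ᶜ) = ENNReal.ofReal (1 - zipfP β n i) := by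
      rw [measure_compl (measurableSet_singleton i) (measure_ne_top _ _),
        zipfMeasure_singleton, measure_univ, ← ENNReal.ofReal_one,
        ← ENNReal.ofReal_sub _ (zipfP_nonneg β n i)]
    rw [hcompl]
    calc ∏ _t : Fin N, ENNReal.ofReal (1 - zipfP β n i)
        = ENNReal.ofReal (1 - zipfP β n i) ^ N := by
          rw [Finset.prod_const, Finset.card_univ, Fintype.card_fin]
      _ ≤ ENNReal.ofReal (Real.exp (-zipfP β n i)) ^ N :=
          pow_le_pow_left₀ (zero_le) (ENNReal.ofReal_le_ofReal
            (by linarith [Real.add_one_le_exp (-(zipfP β n i))])) N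
      _ = ENNReal.ofReal (Real.exp (-(zipfP β n i * N))) := by
          rw [← ENNReal.ofReal_pow (Real.exp_nonneg _), ← Real.exp_nat_mul]
          congr 1; ring
      _ ≤ ENNReal.ofReal (Real.exp (-τ)) := by
          apply ENNReal.ofReal_le_ofReal
          apply Real.exp_le_exp.mpr
          have := hkey i hi
          linarith
  refine le_trans (Finset.sum_le_sum hone) ?_
  have hsumconst : ∑ _j ∈ Finset.Icc 1 M, ENNReal.ofReal (Real.exp (-τ))
      = (M : ENNReal) * ENNReal.ofReal (Real.exp (-τ)) := by
    rw [Finset.sum_const, Nat.card_Icc]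
    simp [nsmul_eq_mul]
  rw [hsumconst]
  have hMk' : (M : ENNReal) ≤ (k : ENNReal) := by exact_mod_cast hMk
  refine le_trans (mul_le_mul_left hMk' _) ?_
  rw [ENNReal.ofReal_mul (Nat.cast_nonneg k), ENNReal.ofReal_natCast]
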